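/- Let R be a Noetherian local domain and I an ideal with μ(I) = 2 (minimally 2-generated) and grade 2. Then Ann(Ext^2_R(R/I, R)) = (I : I^{**}), where I^{**} = Hom(Hom(I,R),R) is the reflexive closure (viewed inside R). -/

import Mathlib

open CategoryTheory IsLocalRing

/-- `extModule R M N n` is the Ext module `Ext^n_R(M, N)`. -/
noncomputable def extModule (R : Type) [CommRing R] (M N : ModuleCat R) (n : ℕ) : ModuleCat R :=
  ((Ext R (ModuleCat R) n).obj (Opposite.op M)).obj N

/-- `extIdeal R I n` is `Ext^n_R(R/I, R)`. -/
noncomputable def extIdeal (R : Type) [CommRing R] (I : Ideal R) (n : ℕ) : ModuleCat R :=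
  extModule R (ModuleCat.of R (R ⧸ I)) (ModuleCat.of R R) n

/-- The grade of an ideal `I`: the least `n` with `Ext^n_R(R/I, R) ≠ 0`. -/
noncomputable def gradeIdeal (R : Type) [CommRing R] (I : Ideal R) : ℕ :=
  sInf {n | Nontrivial (extIdeal R I n)}

/-- The higher divisorial ideal `D(I) = Ann (Ext^g_R(R/I,R))`, `g = grade I`. -/
noncomputable def Dideal (R : Type) [CommRing R] (I : Ideal R) : Ideal R :=
  Module.annihilator R (extIdeal R I (gradeIdeal R I))

/-- The depth of a local ring: the grade of its maximal ideal. -/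
noncomputable def ringDepth (R : Type) [CommRing R] [IsLocalRing R] : ℕ :=
  gradeIdeal R (maximalIdeal R)

/-- A Noetherian local ring is Cohen–Macaulay if its depth equals its Krull dimension. -/
def IsCohenMacaulayLocal (R : Type) [CommRing R] [IsLocalRing R] : Prop :=
  (ringDepth R : WithBot ℕ∞) = ringKrullDim R

/-- The height of an ideal: the infimum of heights of primes containing it. -/
noncomputable def idealHeight (R : Type) [CommRing R] (I : Ideal R) : ℕ∞ :=
  ⨅ p : {p : PrimeSpectrum R // I ≤ p.asIdeal}, Order.height p.1

open CategoryTheory Limits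

noncomputable section
variable {R : Type} [CommRing R]

/-- the map R² → R, (x,y) ↦ xa+yb -/
def fLin (a b : R) : (Fin 2 → R) →ₗ[R] R where
  toFun v := v 0 * a + v 1 * b
  map_add' x y := by simp [add_mul]; ring
  map_smul' r x := by simp [mul_add, mul_assoc]

lemma fLin_range (a b : R) : LinearMap.range (fLin a b) = (Ideal.span {a, b}).restrictScalars R := by
  ext x
  simp only [LinearMap.mem_range, Submodule.restrictScalars_mem, Ideal.mem_span_pair]
  constructor
  · rintro ⟨v, rfl⟩; exact ⟨v 0, v 1, rfl⟩
  · rintro ⟨u, v, rfl⟩; exact ⟨![u, v], by simp [fLin]⟩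

@[simp] lemma fLin_apply (a b : R) (v : Fin 2 → R) : fLin a b v = v 0 * a + v 1 * b := rfl

def fHom (a b : R) : ModuleCat.of R (Fin 2 → R) ⟶ ModuleCat.of R R :=
  ModuleCat.ofHom (fLin a b)

lemma projD_comp {X Y : ModuleCat R} (f : X ⟶ Y) : Projective.d f ≫ f = 0 :=
  (Category.assoc (Projective.π (kernel f)) (kernel.ι f) f).trans (by rw [kernel.condition, comp_zero]; rfl)

/-- the resolution complex -/
def resComplex (a b : R) : ChainComplex (ModuleCat R) ℕ :=
  ChainComplex.mk' (ModuleCat.of R R) (ModuleCat.of R (Fin 2 → R)) (fHom a b)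
    (fun f => ⟨_, Projective.d f, projD_comp f⟩)

lemma resComplex_d_1_0 (a b : R) : (resComplex a b).d 1 0 = fHom a b := by
  simp [resComplex]

lemma resComplex_exactAt_succ (a b : R) (n : ℕ) :
    (resComplex a b).ExactAt (n + 1) := by
  rw [HomologicalComplex.exactAt_iff' _ (n + 1 + 1) (n + 1) n (by simp) (by simp)]
  refine (ShortComplex.exact_iff_of_iso (S₂ := ShortComplex.mk _ _
    (projD_comp ((resComplex a b).d (n + 1) n))) ?_).2 (CategoryTheory.exact_d_f _)
  exact ShortComplex.isoMk (ChainComplex.mk'XIso (ModuleCat.of R R) (ModuleCat.of R (Fin 2 → R))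
      (fHom a b) (fun f => ⟨_, Projective.d f, projD_comp f⟩) n) (Iso.refl _) (Iso.refl _)
    ((ChainComplex.mk'_d (ModuleCat.of R R) (ModuleCat.of R (Fin 2 → R))
      (fHom a b) (fun f => ⟨_, Projective.d f, projD_comp f⟩) n).symm.trans (Category.comp_id _).symm)
    ((Category.id_comp _).trans (Category.comp_id _).symm)

instance (a b : R) (n : ℕ) : Projective ((resComplex a b).X n) := by
  obtain (_ | _ | _ | n) := n
  · exact ModuleCat.projective_of_free (Module.Basis.singleton (Fin 1) R)
  · exact ModuleCat.projective_of_free (Pi.basisFun R (Fin 2))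
  · apply Projective.projective_over
  · apply Projective.projective_over

def resPi (a b : R) : ModuleCat.of R R ⟶ ModuleCat.of R (R ⧸ Ideal.span {a, b}) :=
  ModuleCat.ofHom (Ideal.span {a, b}).mkQ

lemma fHom_comp_resPi (a b : R) : fHom a b ≫ resPi a b = 0 := by
  apply ModuleCat.hom_ext; apply LinearMap.ext; intro v
  have : fLin a b v ∈ Ideal.span {a, b} := by
    rw [← Submodule.restrictScalars_mem R, ← fLin_range a b]
    exact ⟨v, rfl⟩
  exact (Submodule.Quotient.mk_eq_zero _).2 this

def resSc (a b : R) : ShortComplex (ModuleCat R) :=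
  ShortComplex.mk (fHom a b) (resPi a b) (fHom_comp_resPi a b)

lemma resSc_exact (a b : R) : (resSc a b).Exact := by
  rw [ShortComplex.moduleCat_exact_iff]
  intro x hx
  have : x ∈ LinearMap.range (fLin a b) := by
    rw [fLin_range]
    exact (Submodule.Quotient.mk_eq_zero (Ideal.span {a, b})).1 hx
  obtain ⟨v, hv⟩ := this
  exact ⟨v, hv⟩

instance resSc_epi (a b : R) : Epi (resSc a b).g := by
  rw [ModuleCat.epi_iff_surjective]
  exact Submodule.mkQ_surjective (Ideal.span {a, b})

def resolution (a b : R) : ProjectiveResolution (ModuleCat.of R (R ⧸ Ideal.span {a, b})) where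
  complex := resComplex a b
  π := (ChainComplex.toSingle₀Equiv _ _).symm ⟨resPi a b, by
        rw [resComplex_d_1_0]; exact fHom_comp_resPi a b⟩
  quasiIso := ⟨fun n => by
    cases n with
    | zero =>
      rw [ChainComplex.quasiIsoAt₀_iff, ShortComplex.quasiIso_iff_of_zeros']
      · refine (ShortComplex.exact_and_epi_g_iff_of_iso (S₂ := resSc a b) ?_).2
          ⟨resSc_exact a b, resSc_epi a b⟩
        exact ShortComplex.isoMk (Iso.refl _) (Iso.refl _) (Iso.refl _)
            (by simp [resComplex, resSc]; rfl) (by simp [resSc]; rfl)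
      all_goals rfl
    | succ n =>
      rw [quasiIsoAt_iff_exactAt']
      · apply resComplex_exactAt_succ
      · apply ChainComplex.exactAt_succ_single_obj⟩

section Core2
variable [IsDomain R]

variable [IsDomain R]

lemma span_pair_ne_zero {a b : R} (hb : b ≠ 0) : Ideal.span {a, b} ≠ 0 := by
  intro h
  apply hb
  have : b ∈ Ideal.span {a, b} := Ideal.subset_span (by simp)
  rwa [h, Ideal.zero_eq_bot, Ideal.mem_bot] at this

variable (a b : R)

lemma phiK_inj : Function.Injective (algebraMap R (FractionRing R)) :=
  IsFractionRing.injective R (FractionRing R)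

lemma phiK_ne_zero {c : R} (hc : c ≠ 0) : algebraMap R (FractionRing R) c ≠ 0 := fun h =>
  hc (phiK_inj (by rw [h, map_zero]))

lemma one_div_ne_zero' (hb : b ≠ 0) :
    (1 / ((Ideal.span {a, b} : Ideal R) :
      FractionalIdeal (nonZeroDivisors R) (FractionRing R)) :
      FractionalIdeal (nonZeroDivisors R) (FractionRing R)) ≠ 0 := by
  intro h
  have h1 : (1 : FractionRing R) ∈ (1 / ((Ideal.span {a, b} : Ideal R) :
      FractionalIdeal (nonZeroDivisors R) (FractionRing R)) :
      FractionalIdeal (nonZeroDivisors R) (FractionRing R)) := by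
    rw [FractionalIdeal.mem_div_iff_of_ne_zero (by simpa using span_pair_ne_zero hb)]
    intro y hy
    rw [one_mul]
    rw [FractionalIdeal.mem_coeIdeal] at hy
    obtain ⟨c, _, rfl⟩ := hy
    exact FractionalIdeal.mem_one_iff _ |>.2 ⟨c, rfl⟩
  rw [h, FractionalIdeal.mem_zero_iff] at h1
  exact one_ne_zero h1

lemma mem_one_div_of_gen (hb : b ≠ 0) (m : FractionRing R)
    (hma : m * algebraMap R _ a ∈ (1 : FractionalIdeal (nonZeroDivisors R) (FractionRing R)))
    (hmb : m * algebraMap R _ b ∈ (1 : FractionalIdeal (nonZeroDivisors R) (FractionRing R))) :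
    m ∈ (1 / ((Ideal.span {a, b} : Ideal R) :
      FractionalIdeal (nonZeroDivisors R) (FractionRing R)) :
      FractionalIdeal (nonZeroDivisors R) (FractionRing R)) := by
  rw [FractionalIdeal.mem_div_iff_of_ne_zero (by simpa using span_pair_ne_zero hb)]
  intro y hy
  rw [FractionalIdeal.mem_coeIdeal] at hy
  obtain ⟨c, hc, rfl⟩ := hy
  rw [Ideal.mem_span_pair] at hc
  obtain ⟨s, t, hst⟩ := hc
  obtain ⟨u, hu⟩ := (FractionalIdeal.mem_one_iff _).1 hma
  obtain ⟨v, hv⟩ := (FractionalIdeal.mem_one_iff _).1 hmb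
  refine (FractionalIdeal.mem_one_iff _).2 ⟨s * u + t * v, ?_⟩
  rw [← hst]
  push_cast [map_add, map_mul]
  rw [hu, hv]
  ring

/-- The main algebraic core. -/
theorem core {P₂ : Type} [AddCommGroup P₂] [Module R P₂] (hb : b ≠ 0)
    (D : P₂ →ₗ[R] (Fin 2 → R))
    (hD : LinearMap.range D = LinearMap.ker (fLin a b)) (r : R) :
    (∀ φ : P₂ →ₗ[R] R, LinearMap.ker D ≤ LinearMap.ker φ →
        ∃ α : (Fin 2 → R) →ₗ[R] R, α.comp D = r • φ) ↔
      (∀ x : FractionRing R,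
        x ∈ (1 / (1 / ((Ideal.span {a, b} : Ideal R) :
            FractionalIdeal (nonZeroDivisors R) (FractionRing R)))) →
          algebraMap R (FractionRing R) r * x ∈
            ((Ideal.span {a, b} : Ideal R) :
              FractionalIdeal (nonZeroDivisors R) (FractionRing R))) := by
  set K := FractionRing R
  set φK := algebraMap R K with hφK
  have hbK : φK b ≠ 0 := phiK_ne_zero hb
  -- the distinguished syzygy
  have hw : (![b, -a] : Fin 2 → R) ∈ LinearMap.ker (fLin a b) := by
    simp [fLin]; ring
  obtain ⟨p₁, hp₁⟩ : (![b, -a] : Fin 2 → R) ∈ LinearMap.range D := by rw [hD]; exact hw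
  -- membership of D p in the kernel
  have hDker : ∀ p : P₂, (D p) 0 * a + (D p) 1 * b = 0 := by
    intro p
    have : D p ∈ LinearMap.ker (fLin a b) := by rw [← hD]; exact ⟨p, rfl⟩
    simpa using this
  -- key relation
  have key : ∀ (φ : P₂ →ₗ[R] R), LinearMap.ker D ≤ LinearMap.ker φ →
      ∀ p : P₂, b * φ p = (D p) 0 * φ p₁ := by
    intro φ hφ p
    have hmem : b • p - (D p) 0 • p₁ ∈ LinearMap.ker D := by
      rw [LinearMap.mem_ker, map_sub, map_smul, map_smul, hp₁]
      have h1 := hDker p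
      ext i
      fin_cases i <;>
        simp only [Pi.sub_apply, Pi.smul_apply, smul_eq_mul, Pi.zero_apply,
          Fin.zero_eta, Fin.mk_one,
          Matrix.cons_val_zero, Matrix.cons_val_one, Matrix.head_cons]
      · ring
      · linear_combination h1
    have := hφ hmem
    rw [LinearMap.mem_ker, map_sub, map_smul, map_smul, smul_eq_mul, smul_eq_mul,
      sub_eq_zero] at this
    exact this
  constructor
  · -- annihilation implies colon membership
    intro H x hx
    -- build the hom `ψ` attached to `x`
    have hval : ∀ p : P₂, ∃ c : R, φK c = x * φK ((D p) 0) * (φK b)⁻¹ := by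
      intro p
      have hm : φK ((D p) 0) * (φK b)⁻¹ ∈ (1 / ((Ideal.span {a, b} : Ideal R) :
          FractionalIdeal (nonZeroDivisors R) K) :
          FractionalIdeal (nonZeroDivisors R) K) := by
        apply mem_one_div_of_gen a b hb
        · refine (FractionalIdeal.mem_one_iff _).2 ⟨-((D p) 1), ?_⟩
          have h1 := hDker p
          have : φK ((D p) 0 * a) = φK (-((D p) 1 * b)) := by
            congr 1; linear_combination h1
          rw [map_mul] at this
          field_simp
          rw [map_neg, map_mul] at this
          show φK (-(D p) 1) * φK b = φK ((D p) 0) * φK a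
          rw [map_neg, this]; ring
        · refine (FractionalIdeal.mem_one_iff _).2 ⟨(D p) 0, ?_⟩
          field_simp
          rfl
      have := (FractionalIdeal.mem_div_iff_of_ne_zero
        (one_div_ne_zero' a b hb)).1 hx _ hm
      obtain ⟨c, hc⟩ := (FractionalIdeal.mem_one_iff _).1 this
      exact ⟨c, by rw [hc]; ring⟩
    choose ψ₀ hψ₀ using hval
    have hψadd : ∀ p q : P₂, ψ₀ (p + q) = ψ₀ p + ψ₀ q := by
      intro p q
      apply phiK_inj
      rw [map_add, hψ₀, hψ₀, hψ₀]
      simp only [map_add, Pi.add_apply]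
      ring
    have hψsmul : ∀ (c : R) (p : P₂), ψ₀ (c • p) = c * ψ₀ p := by
      intro c p
      apply phiK_inj
      rw [map_mul, hψ₀, hψ₀]
      simp only [map_smul, Pi.smul_apply, smul_eq_mul, map_mul]
      ring
    set ψ : P₂ →ₗ[R] R :=
      { toFun := ψ₀
        map_add' := hψadd
        map_smul' := hψsmul } with hψdef
    have hψker : LinearMap.ker D ≤ LinearMap.ker ψ := by
      intro p hp
      rw [LinearMap.mem_ker] at hp ⊢
      apply phiK_inj
      show φK (ψ₀ p) = φK 0
      rw [hψ₀, hp]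
      simp
    obtain ⟨α, hα⟩ := H ψ hψker
    have hψp₁ : φK (ψ p₁) = x := by
      show φK (ψ₀ p₁) = x
      rw [hψ₀, hp₁]
      simp only [Matrix.cons_val_zero]
      field_simp
    have hαw : α ![b, -a] = r * ψ p₁ := by
      have := congrFun (congrArg (fun (f : P₂ →ₗ[R] R) => (f : P₂ → R)) hα) p₁
      simp only [LinearMap.coe_comp, Function.comp_apply, hp₁, LinearMap.smul_apply,
        smul_eq_mul] at this
      exact this
    have hwdecomp : (![b, -a] : Fin 2 → R) = b • ![1, 0] + (-a) • ![0, 1] := by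
      ext i; fin_cases i <;> simp
    have hαwI : α ![b, -a] ∈ Ideal.span {a, b} := by
      rw [hwdecomp, map_add, map_smul, map_smul, smul_eq_mul, smul_eq_mul]
      rw [Ideal.mem_span_pair]
      exact ⟨-α ![0, 1], α ![1, 0], by ring⟩
    rw [← hψp₁, ← map_mul]
    rw [FractionalIdeal.mem_coeIdeal]
    exact ⟨r * ψ p₁, by rw [← hαw]; exact hαwI, rfl⟩
  · -- colon membership implies annihilation
    intro hr φ hφ
    set q : K := φK (φ p₁) with hq
    have hqJ : q ∈ (1 / (1 / ((Ideal.span {a, b} : Ideal R) :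
        FractionalIdeal (nonZeroDivisors R) K)) :
        FractionalIdeal (nonZeroDivisors R) K) := by
      rw [FractionalIdeal.mem_div_iff_of_ne_zero (one_div_ne_zero' a b hb)]
      intro m hm
      rw [FractionalIdeal.mem_div_iff_of_ne_zero (by simpa using span_pair_ne_zero hb)] at hm
      have hma : m * φK a ∈ (1 : FractionalIdeal (nonZeroDivisors R) K) :=
        hm _ ((FractionalIdeal.mem_coeIdeal _).2 ⟨a, Ideal.subset_span (by simp), rfl⟩)
      have hmb : m * φK b ∈ (1 : FractionalIdeal (nonZeroDivisors R) K) :=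
        hm _ ((FractionalIdeal.mem_coeIdeal _).2 ⟨b, Ideal.subset_span (by simp), rfl⟩)
      obtain ⟨y, hy⟩ := (FractionalIdeal.mem_one_iff _).1 hma
      obtain ⟨x', hx'⟩ := (FractionalIdeal.mem_one_iff _).1 hmb
      have hz : (![x', -y] : Fin 2 → R) ∈ LinearMap.ker (fLin a b) := by
        rw [LinearMap.mem_ker]
        simp only [fLin_apply, Matrix.cons_val_zero, Matrix.cons_val_one, Matrix.head_cons]
        apply phiK_inj
        rw [map_add, map_mul, map_mul, map_neg, map_zero]
        rw [hx', hy]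
        ring
      obtain ⟨p, hp⟩ : (![x', -y] : Fin 2 → R) ∈ LinearMap.range D := by rw [hD]; exact hz
      have hbp : b * φ p = x' * φ p₁ := by
        have := key φ hφ p
        rw [hp] at this
        simpa using this
      have : q * m = φK (φ p) := by
        apply mul_right_cancel₀ hbK
        calc q * m * φK b = φK (φ p₁) * (m * φK b) := by rw [hq]; ring
        _ = φK (φ p₁) * φK x' := by rw [hx']
        _ = φK (x' * φ p₁) := by rw [map_mul]; ring
        _ = φK (b * φ p) := by rw [hbp]
        _ = φK (φ p) * φK b := by rw [map_mul]; ring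
      rw [this]
      exact (FractionalIdeal.mem_one_iff _).2 ⟨φ p, rfl⟩
    have := hr q hqJ
    rw [← map_mul] at this
    rw [FractionalIdeal.mem_coeIdeal] at this
    obtain ⟨c, hcI, hc⟩ := this
    have hcEq : c = r * φ p₁ := phiK_inj hc
    rw [hcEq] at hcI
    rw [Ideal.mem_span_pair] at hcI
    obtain ⟨s, t, hst⟩ := hcI
    refine ⟨fLin t (-s), ?_⟩
    ext p
    simp only [LinearMap.coe_comp, Function.comp_apply, fLin_apply, LinearMap.smul_apply,
      smul_eq_mul]
    have h1 := hDker p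
    have h2 := key φ hφ p
    apply mul_left_cancel₀ hb
    linear_combination (-(s : R)) * h1 + (-r) * h2 + (D p) 0 * hst



section Glue
variable (a b : R)

/-- The Hom cochain complex of the resolution. -/
def CCab : CochainComplex (ModuleCat R) ℕ :=
  (resComplex a b).linearYonedaObj R (ModuleCat.of R R)

/-- The short complex computing `Ext²`. -/
def Sab : ShortComplex (ModuleCat R) := (CCab a b).sc' 1 2 3

lemma Sab_g_apply (φ : (Sab a b).X₂) :
    (Sab a b).g φ = (resComplex a b).d 3 2 ≫ φ := rfl

lemma Sab_f_apply (α : (Sab a b).X₁) :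
    (Sab a b).f α = (resComplex a b).d 2 1 ≫ α := rfl

/-- `Ext²(R/(a,b), R)` is computed by the explicit resolution. -/
def extIso : extIdeal R (Ideal.span {a, b}) 2 ≅ (Sab a b).moduleCatLeftHomologyData.H :=
  (resolution a b).isoExt 2 (ModuleCat.of R R) ≪≫
    (CCab a b).homologyIsoSc' 1 2 3 (by simp) (by simp) ≪≫
    (Sab a b).moduleCatHomologyIso

lemma hex1 : LinearMap.range ((resComplex a b).d 2 1).hom = LinearMap.ker (fLin a b) := by
  have h := resComplex_exactAt_succ a b 0
  rw [HomologicalComplex.exactAt_iff' _ 2 1 0 (by simp) (by simp)] at h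
  rw [ShortComplex.moduleCat_exact_iff_range_eq_ker] at h
  exact h

lemma hex2 : LinearMap.range ((resComplex a b).d 3 2).hom =
    LinearMap.ker ((resComplex a b).d 2 1).hom := by
  have h := resComplex_exactAt_succ a b 1
  rw [HomologicalComplex.exactAt_iff' _ 3 2 1 (by simp) (by simp)] at h
  rw [ShortComplex.moduleCat_exact_iff_range_eq_ker] at h
  exact h

end Glue

lemma ann_moduleCatHomology (S : ShortComplex (ModuleCat R)) (r : R) :
    r ∈ Module.annihilator R S.moduleCatLeftHomologyData.H ↔
      ∀ φ : S.X₂, S.g φ = 0 → ∃ α : S.X₁, S.f α = r • φ := by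
  rw [Module.mem_annihilator]
  constructor
  · intro h φ hφ
    have h2 := h (Submodule.Quotient.mk ⟨φ, hφ⟩)
    change r • (Submodule.Quotient.mk ⟨φ, hφ⟩ :
      LinearMap.ker S.g.hom ⧸ LinearMap.range S.moduleCatToCycles) = 0 at h2
    rw [← Submodule.Quotient.mk_smul, Submodule.Quotient.mk_eq_zero] at h2
    obtain ⟨α, hα⟩ := h2
    exact ⟨α, by have := congrArg Subtype.val hα; exact this⟩
  · intro h m
    obtain ⟨⟨φ, hφ⟩, rfl⟩ := Submodule.Quotient.mk_surjective _ m
    change r • (Submodule.Quotient.mk ⟨φ, hφ⟩ :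
      LinearMap.ker S.g.hom ⧸ LinearMap.range S.moduleCatToCycles) = 0
    rw [← Submodule.Quotient.mk_smul, Submodule.Quotient.mk_eq_zero]
    obtain ⟨α, hα⟩ := h φ hφ
    exact ⟨α, Subtype.ext (by exact hα)⟩

section Main
variable [IsDomain R] (a b : R)

/-- The second differential, viewed as a linear map into `Fin 2 → R`. -/
def Dab : ((resComplex a b).X 2 : Type) →ₗ[R] (Fin 2 → R) :=
  ((resComplex a b).d 2 1).hom

lemma main_iff (hb : b ≠ 0) (r : R) :
    r ∈ Module.annihilator R (extIdeal R (Ideal.span {a, b}) 2) ↔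
      (∀ x : FractionRing R,
        x ∈ (1 / (1 / ((Ideal.span {a, b} : Ideal R) :
            FractionalIdeal (nonZeroDivisors R) (FractionRing R)))) →
          algebraMap R (FractionRing R) r * x ∈
            ((Ideal.span {a, b} : Ideal R) :
              FractionalIdeal (nonZeroDivisors R) (FractionRing R))) := by
  rw [(extIso a b).toLinearEquiv.annihilator_eq, ann_moduleCatHomology]
  rw [← core a b hb (Dab a b) (hex1 a b) r]
  constructor
  · intro h φ hφ
    obtain ⟨α, hα⟩ := h (ConcreteCategory.ofHom (C := ModuleCat R) (X := (resComplex a b).X 2)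
        (Y := ModuleCat.of R R) φ) (by
      refine (Sab_g_apply a b _).trans ?_
      have h3 : LinearMap.range ((resComplex a b).d 3 2).hom ≤ LinearMap.ker φ := by
        rw [hex2]; exact hφ
      exact ModuleCat.hom_ext (LinearMap.range_le_ker_iff.1 h3))
    exact ⟨α.hom, by have := congrArg ModuleCat.Hom.hom ((Sab_f_apply a b α).symm.trans hα); exact this⟩
  · intro h φ hφ
    let φ' : ((resComplex a b).X 2 : Type) →ₗ[R] R := φ.hom
    rw [Sab_g_apply] at hφ
    have hφ' : LinearMap.ker (Dab a b) ≤ LinearMap.ker φ' := by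
      intro p hp
      obtain ⟨q, hq⟩ : p ∈ LinearMap.range ((resComplex a b).d 3 2).hom := by
        rw [hex2]; exact hp
      have h4 : ((resComplex a b).d 3 2 ≫ φ) q = 0 := by rw [hφ]; rfl
      have h5 : φ' (((resComplex a b).d 3 2).hom q) = 0 := h4
      have h6 : φ' p = 0 := by rw [← hq]; exact h5
      exact h6
    obtain ⟨α, hα⟩ := h φ' hφ'
    exact ⟨ConcreteCategory.ofHom (C := ModuleCat R) (X := (resComplex a b).X 1)
        (Y := ModuleCat.of R R) α, (Sab_f_apply a b _).trans (ModuleCat.hom_ext hα)⟩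

end Main
end Core2
end

/-- In a Noetherian local domain, for an ideal `I` with `μ(I) = 2` and
grade 2, `Ann(Ext²_R(R/I,R)) = (I : I**)`, where `I** = (R : (R : I))` is the reflexive
closure of `I` computed inside the fraction field and viewed inside `R`. -/
theorem stmt15 (R : Type) [CommRing R] [IsNoetherianRing R] [IsLocalRing R] [IsDomain R]
    (I : Ideal R)
    (hgen : ∃ a b : R, I = Ideal.span {a, b})
    (hmin : ∀ a : R, I ≠ Ideal.span {a})
    (hlt : ∀ i < 2, Subsingleton (extIdeal R I i))
    (hg : Nontrivial (extIdeal R I 2)) :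
    (↑(Module.annihilator R (extIdeal R I 2)) : Set R) =
      {r : R | ∀ x : FractionRing R,
        x ∈ (1 / (1 / (I : FractionalIdeal (nonZeroDivisors R) (FractionRing R)))) →
          algebraMap R (FractionRing R) r * x ∈
            (I : FractionalIdeal (nonZeroDivisors R) (FractionRing R))} := by
  obtain ⟨a, b, rfl⟩ := hgen
  have hb : b ≠ 0 := by
    rintro rfl
    refine hmin a ?_
    ext x
    simp only [Ideal.mem_span_pair, Ideal.mem_span_singleton]
    constructor
    · rintro ⟨u, v, rfl⟩; exact ⟨u, by ring⟩
    · rintro ⟨c, rfl⟩; exact ⟨c, 0, by ring⟩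
  ext r
  simpa only [SetLike.mem_coe, Set.mem_setOf_eq] using main_iff a b hb r
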